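/- arXiv:1702.00111 — 2 statements merged into one kernel-verified Lean document; each statement's English description precedes it below -/
import Mathlib

section
/- For i.i.d. standard normal random variables Y_1,...,Y_n with maximum Y_(n), taking b_n = Φ^{-1}(1 - 1/n) and a_n = 1/(n φ(b_n)), one has lim_{n→∞} [Φ(a_n x + b_n)]^n = exp(-e^{-x}) for every real x. -/
open MeasureTheory ProbabilityTheory Filter Real


noncomputable def Phi (x : ℝ) : ℝ := ((gaussianReal 0 1) (Set.Iic x)).toReal

noncomputable def stdphi (x : ℝ) : ℝ := gaussianPDFReal 0 1 x

noncomputable def PhiInv (p : ℝ) : ℝ := Function.invFun Phi p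

lemma stdphi_pos (x : ℝ) : 0 < stdphi x := gaussianPDFReal_pos 0 1 x one_ne_zero

lemma stdphi_def' (x : ℝ) : stdphi x = (Real.sqrt (2 * π))⁻¹ * Real.exp (- x^2 / 2) := by
  simp [stdphi, gaussianPDFReal]

lemma stdphi_cont : Continuous stdphi := by
  have : stdphi = fun x => (Real.sqrt (2 * π))⁻¹ * Real.exp (- x^2 / 2) := funext stdphi_def'
  rw [this]; continuity

lemma stdphi_integrable : Integrable stdphi := integrable_gaussianPDFReal 0 1

lemma stdphi_shift (b e : ℝ) : stdphi (b + e) = stdphi b * Real.exp (-(b*e) - e^2/2) := by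
  rw [stdphi_def', stdphi_def', mul_assoc, ← Real.exp_add]
  congr 1
  ring

lemma Phi_eq_integral (x : ℝ) : Phi x = ∫ t in Set.Iic x, stdphi t := by
  rw [Phi, gaussianReal_apply_eq_integral 0 one_ne_zero, ENNReal.toReal_ofReal]
  · rfl
  · exact setIntegral_nonneg measurableSet_Iic (fun t _ => gaussianPDFReal_nonneg 0 1 t)

lemma Phi_sub (a b : ℝ) : Phi b - Phi a = ∫ t in a..b, stdphi t := by
  rw [Phi_eq_integral, Phi_eq_integral]
  exact intervalIntegral.integral_Iic_sub_Iic stdphi_integrable.integrableOn stdphi_integrable.integrableOn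

lemma Phi_strictMono : StrictMono Phi := by
  intro a b hab
  have h : 0 < ∫ t in a..b, stdphi t :=
    intervalIntegral.intervalIntegral_pos_of_pos (stdphi_integrable.intervalIntegrable) (fun t => stdphi_pos t) hab
  rw [← Phi_sub a b] at h
  linarith

lemma Phi_le_one (x : ℝ) : Phi x ≤ 1 := by
  rw [Phi]
  exact ENNReal.toReal_le_of_le_ofReal zero_le_one (by simpa using prob_le_one)

lemma Phi_nonneg (x : ℝ) : 0 ≤ Phi x := ENNReal.toReal_nonneg

lemma Phi_lt_one (x : ℝ) : Phi x < 1 :=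
  lt_of_lt_of_le (Phi_strictMono (lt_add_one x)) (Phi_le_one _)

lemma Phi_pos (x : ℝ) : 0 < Phi x :=
  lt_of_le_of_lt (Phi_nonneg (x - 1)) (Phi_strictMono (sub_one_lt x))

lemma Phi_tendsto_atTop : Tendsto Phi atTop (nhds 1) := by
  have h := tendsto_measure_Iic_atTop (μ := gaussianReal 0 1)
  rw [measure_univ] at h
  have := (ENNReal.tendsto_toReal (by norm_num : (1:ENNReal) ≠ ⊤)).comp h
  exact this

lemma Phi_continuous : Continuous Phi := by
  have h : Phi = fun x => Phi 0 + ∫ t in (0:ℝ)..x, stdphi t := by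
    funext x
    rw [← Phi_sub 0 x]; ring
  rw [h]
  exact continuous_const.add
    (intervalIntegral.continuous_primitive (fun a b => stdphi_integrable.intervalIntegrable) 0)

lemma Phi_tendsto_atBot : Tendsto Phi atBot (nhds 0) := by
  have h := tendsto_measure_iInter_atBot (μ := gaussianReal 0 1)
    (s := fun x : ℝ => Set.Iic x) (fun i => measurableSet_Iic.nullMeasurableSet)
    (fun a b hab => Set.Iic_subset_Iic.2 hab) ⟨0, measure_ne_top _ _⟩
  have he : ⋂ n : ℝ, Set.Iic n = (∅ : Set ℝ) := by
    apply Set.eq_empty_iff_forall_notMem.2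
    intro y hy
    have := Set.mem_iInter.1 hy (y - 1)
    simp at this
    linarith
  rw [he, measure_empty] at h
  have := (ENNReal.tendsto_toReal (by norm_num : (0:ENNReal) ≠ ⊤)).comp h
  exact this

lemma PhiInv_spec {p : ℝ} (h0 : 0 < p) (h1 : p < 1) : Phi (PhiInv p) = p := by
  have ha : ∃ a, Phi a < p := by
    have := Phi_tendsto_atBot.eventually_lt_const h0
    exact this.exists
  have hb : ∃ b, p < Phi b := by
    have := Phi_tendsto_atTop.eventually_const_lt h1
    exact this.exists
  obtain ⟨a, ha⟩ := ha
  obtain ⟨b, hb⟩ := hb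
  have : p ∈ Set.range Phi :=
    intermediate_value_univ a b Phi_continuous ⟨ha.le, hb.le⟩
  exact Function.invFun_eq this

lemma hasDerivAt_stdphi (x : ℝ) : HasDerivAt stdphi (-x * stdphi x) x := by
  have h1 : HasDerivAt (fun y : ℝ => -y^2/2) (-x) x := by
    have := ((hasDerivAt_pow 2 x).neg.div_const 2)
    simpa using this.congr_deriv (by push_cast; ring)
  have h2 := h1.exp
  have h3 := h2.const_mul ((Real.sqrt (2 * π))⁻¹)
  have he : (fun y : ℝ => (Real.sqrt (2 * π))⁻¹ * Real.exp (-y^2/2)) = stdphi := by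
    funext y; rw [stdphi_def']
  rw [he] at h3
  refine h3.congr_deriv ?_
  rw [stdphi_def']
  ring

lemma mills_upper {t : ℝ} (ht : 0 < t) : 1 - Phi t ≤ stdphi t / t := by
  have key : ∀ u, t ≤ u → Phi u - Phi t ≤ stdphi t / t := by
    intro u hu
    have hpos : ∀ s ∈ Set.uIcc t u, 0 < s := by
      intro s hs
      rw [Set.uIcc_of_le hu] at hs
      exact lt_of_lt_of_le ht hs.1
    have hderiv : ∀ s ∈ Set.uIcc t u,
        HasDerivAt (fun s => -stdphi s / s) (stdphi s * (1 + (s⁻¹)^2)) s := by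
      intro s hs
      have hs0 : s ≠ 0 := (hpos s hs).ne'
      have := ((hasDerivAt_stdphi s).neg.div (hasDerivAt_id s) hs0)
      refine this.congr_deriv ?_
      simp only [id, Pi.neg_apply]
      field_simp
      ring
    have hcont : ContinuousOn (fun s => stdphi s * (1 + (s⁻¹)^2)) (Set.uIcc t u) := by
      apply stdphi_cont.continuousOn.mul
      apply ContinuousOn.add continuousOn_const
      exact ((continuousOn_id.inv₀ (fun s hs => (hpos s hs).ne')).pow 2)
    have hint : IntervalIntegrable _ volume t u := hcont.intervalIntegrable
    have hftc := intervalIntegral.integral_eq_sub_of_hasDerivAt hderiv hint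
    have hmono : ∫ s in t..u, stdphi s ≤ ∫ s in t..u, stdphi s * (1 + (s⁻¹)^2) := by
      apply intervalIntegral.integral_mono_on hu (stdphi_cont.intervalIntegrable t u : IntervalIntegrable _ volume t u) hint
      intro s hs
      nlinarith [stdphi_pos s, sq_nonneg (s⁻¹), mul_nonneg (stdphi_pos s).le (sq_nonneg s⁻¹)]
    rw [← Phi_sub] at hmono
    rw [hftc] at hmono
    have hu0 : 0 < u := lt_of_lt_of_le ht hu
    have : -stdphi u / u ≤ 0 := by
      apply div_nonpos_of_nonpos_of_nonneg (neg_nonpos.2 (stdphi_pos u).le) hu0.le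
    have h5 : -stdphi t / t = -(stdphi t / t) := neg_div _ _
    have h6 : -stdphi u / u = -(stdphi u / u) := neg_div _ _
    rw [h5, h6] at hmono
    linarith [div_nonneg (stdphi_pos u).le hu0.le]
  have hlim : Tendsto (fun u => Phi u - Phi t) atTop (nhds (1 - Phi t)) :=
    Phi_tendsto_atTop.sub_const _
  exact le_of_tendsto hlim (eventually_atTop.2 ⟨t, key⟩)

lemma mills_lower {t : ℝ} (ht : 0 < t) : stdphi t * (t⁻¹ - (t⁻¹)^3) ≤ 1 - Phi t := by
  have key : ∀ u, t ≤ u →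
      stdphi t * (t⁻¹ - (t⁻¹)^3) - stdphi u * (u⁻¹ - (u⁻¹)^3) ≤ Phi u - Phi t := by
    intro u hu
    have hpos : ∀ s ∈ Set.uIcc t u, 0 < s := by
      intro s hs
      rw [Set.uIcc_of_le hu] at hs
      exact lt_of_lt_of_le ht hs.1
    have hderiv : ∀ s ∈ Set.uIcc t u,
        HasDerivAt (fun s => -(stdphi s * (s⁻¹ - (s⁻¹)^3)))
          (stdphi s * (1 - 3 * (s⁻¹)^2 * (s⁻¹)^2)) s := by
      intro s hs
      have hs0 : s ≠ 0 := (hpos s hs).ne'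
      have hinv : HasDerivAt (fun s : ℝ => s⁻¹ - (s⁻¹)^3)
          (-(s^2)⁻¹ - 3 * (s⁻¹)^2 * (-(s^2)⁻¹)) s := by
        have h1 : HasDerivAt (fun s : ℝ => s⁻¹) (-(s^2)⁻¹) s := by
          simpa using (hasDerivAt_inv hs0)
        exact h1.sub ((h1.pow 3).congr_deriv (by push_cast; ring))
      have := (hasDerivAt_stdphi s).mul hinv
      have h2 := this.neg
      refine h2.congr_deriv ?_
      field_simp
      ring
    have hcont : ContinuousOn (fun s => stdphi s * (1 - 3 * (s⁻¹)^2 * (s⁻¹)^2)) (Set.uIcc t u) := by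
      apply stdphi_cont.continuousOn.mul
      apply ContinuousOn.sub continuousOn_const
      have hinv : ContinuousOn (fun s : ℝ => s⁻¹) (Set.uIcc t u) :=
        continuousOn_id.inv₀ (fun s hs => (hpos s hs).ne')
      exact (continuousOn_const.mul (hinv.pow 2)).mul (hinv.pow 2)
    have hint : IntervalIntegrable _ volume t u := hcont.intervalIntegrable
    have hftc := intervalIntegral.integral_eq_sub_of_hasDerivAt hderiv hint
    have hmono : ∫ s in t..u, stdphi s * (1 - 3 * (s⁻¹)^2 * (s⁻¹)^2) ≤ ∫ s in t..u, stdphi s := by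
      apply intervalIntegral.integral_mono_on hu hint (stdphi_cont.intervalIntegrable t u : IntervalIntegrable _ volume t u)
      intro s hs
      nlinarith [stdphi_pos s, mul_nonneg (stdphi_pos s).le
        (mul_nonneg (mul_nonneg (by norm_num : (0:ℝ) ≤ 3) (sq_nonneg s⁻¹)) (sq_nonneg s⁻¹))]
    rw [← Phi_sub, hftc] at hmono
    linarith
  have hs0 : Tendsto (fun u : ℝ => stdphi u * (u⁻¹ - (u⁻¹)^3)) atTop (nhds 0) := by
    have h1 : Tendsto stdphi atTop (nhds 0) := by
      have h2 : Tendsto (fun u : ℝ => -u^2/2) atTop atBot := by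
        apply Tendsto.atBot_div_const (by norm_num)
        have := tendsto_neg_atBot_iff.2 (tendsto_pow_atTop (by norm_num : 2 ≠ 0) : Tendsto (fun u : ℝ => u^2) atTop atTop)
        exact this
      have h3 := Real.tendsto_exp_atBot.comp h2
      have : stdphi = fun u => (Real.sqrt (2 * π))⁻¹ * Real.exp (-u^2/2) :=
        funext stdphi_def'
      rw [this]
      simpa using (h3.const_mul ((Real.sqrt (2 * π))⁻¹))
    have h4 : Tendsto (fun u : ℝ => u⁻¹ - (u⁻¹)^3) atTop (nhds 0) := by
      have h5 := (tendsto_inv_atTop_zero (𝕜 := ℝ)).sub ((tendsto_inv_atTop_zero (𝕜 := ℝ)).pow 3)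
      convert h5 using 2
      norm_num
    simpa using h1.mul h4
  have hlim : Tendsto (fun u => Phi u - Phi t + stdphi u * (u⁻¹ - (u⁻¹)^3)) atTop
      (nhds (1 - Phi t)) := by
    simpa using (Phi_tendsto_atTop.sub_const (Phi t)).add hs0
  apply ge_of_tendsto hlim
  filter_upwards [eventually_ge_atTop t] with u hu
  linarith [key u hu]

lemma mills_ratio : Tendsto (fun t => t * (1 - Phi t) / stdphi t) atTop (nhds 1) := by
  have hg : Tendsto (fun t : ℝ => 1 - (t⁻¹)^2) atTop (nhds 1) := by
    have := ((tendsto_inv_atTop_zero (𝕜 := ℝ)).pow 2).const_sub 1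
    simpa using this
  apply tendsto_of_tendsto_of_tendsto_of_le_of_le' hg tendsto_const_nhds
  · filter_upwards [eventually_gt_atTop 0] with t ht
    have h := mills_lower ht
    have h2 : stdphi t * (t⁻¹ - (t⁻¹)^3) * t ≤ (1 - Phi t) * t :=
      mul_le_mul_of_nonneg_right h ht.le
    have h3 : stdphi t * (t⁻¹ - (t⁻¹)^3) * t = stdphi t * (1 - (t⁻¹)^2) := by
      field_simp
    rw [h3] at h2
    rw [le_div_iff₀ (stdphi_pos t)]
    calc (1 - (t⁻¹)^2) * stdphi t = stdphi t * (1 - (t⁻¹)^2) := by ring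
      _ ≤ (1 - Phi t) * t := h2
      _ = t * (1 - Phi t) := by ring
  · filter_upwards [eventually_gt_atTop 0] with t ht
    have h := mills_upper ht
    rw [div_le_one (stdphi_pos t)]
    have h2 : (1 - Phi t) * t ≤ stdphi t / t * t := mul_le_mul_of_nonneg_right h ht.le
    rw [div_mul_cancel₀ _ ht.ne'] at h2
    nlinarith


/-- Classical Gumbel domain-of-attraction result for the standard normal:
with b_n = Φ^{-1}(1 - 1/n) and a_n = 1/(n φ(b_n)),
[Φ(a_n x + b_n)]^n → exp(-e^{-x}). -/
theorem stmt3 (x : ℝ) :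
    Filter.Tendsto (fun n : ℕ =>
      (Phi ((1 / (n * stdphi (PhiInv (1 - 1 / n)))) * x + PhiInv (1 - 1 / n))) ^ n)
      Filter.atTop (nhds (Real.exp (-Real.exp (-x)))) := by
  let b : ℕ → ℝ := fun n => PhiInv (1 - 1 / n)
  let a : ℕ → ℝ := fun n => 1 / (n * stdphi (b n))
  let u : ℕ → ℝ := fun n => a n * x + b n
  have hb : ∀ n : ℕ, 2 ≤ n → Phi (b n) = 1 - 1 / n := by
    intro n hn
    have hn' : (2:ℝ) ≤ n := by exact_mod_cast hn
    apply PhiInv_spec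
    · have : 1 / (n:ℝ) ≤ 1/2 := by
        apply one_div_le_one_div_of_le <;> linarith
      linarith
    · have : 0 < 1 / (n:ℝ) := by positivity
      linarith
  have hbtop : Tendsto b atTop atTop := by
    rw [tendsto_atTop]
    intro M
    have hM : 0 < 1 - Phi M := by linarith [Phi_lt_one M]
    filter_upwards [tendsto_one_div_atTop_nhds_zero_nat.eventually_lt_const hM,
      eventually_ge_atTop 2] with n h1 h2
    have := hb n h2
    have hlt : Phi M < Phi (b n) := by rw [this]; linarith
    exact (Phi_strictMono.lt_iff_lt.1 hlt).le
  have hρ : Tendsto (fun n : ℕ => b n * a n) atTop (nhds 1) := by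
    have hcomp := mills_ratio.comp hbtop
    apply hcomp.congr'
    filter_upwards [eventually_ge_atTop 2] with n hn
    have hn0 : (n:ℝ) ≠ 0 := by positivity
    have hφ := (stdphi_pos (b n)).ne'
    simp only [Function.comp]
    rw [hb n hn]
    show b n * (1 - (1 - 1 / n)) / stdphi (b n) = b n * (1 / (n * stdphi (b n)))
    field_simp
    ring
  have ha0 : Tendsto a atTop (nhds 0) := by
    have h := hρ.div_atTop hbtop
    apply h.congr'
    filter_upwards [hbtop.eventually_gt_atTop 0] with n hn
    show b n * a n / b n = a n
    rw [mul_comm, mul_div_assoc, div_self hn.ne', mul_one]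
  have hutop : Tendsto u atTop atTop :=
    Tendsto.add_atTop (C := 0 * x) (ha0.mul_const x) hbtop
  have hD : Tendsto (fun n : ℕ => (n:ℝ) * stdphi (u n) / u n) atTop
      (nhds (Real.exp (-x))) := by
    have h1 : Tendsto (fun n : ℕ => -(b n * a n * x) - (a n * x)^2/2) atTop
        (nhds (-(1*x) - (0*x)^2/2)) :=
      ((hρ.mul_const x).neg).sub (((ha0.mul_const x).pow 2).div_const 2)
    have h2 : Tendsto (fun n : ℕ => (a n)^2 * x + b n * a n) atTop
        (nhds (0^2 * x + 1)) := ((ha0.pow 2).mul_const x).add hρ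
    have h3 := (Real.continuous_exp.tendsto _ |>.comp h1).div h2 (by norm_num)
    have hv : Real.exp (-(1*x) - (0*x)^2/2) / (0^2 * x + 1) = Real.exp (-x) := by norm_num
    rw [hv] at h3
    have hlim : Tendsto (fun n : ℕ => Real.exp (-(b n * a n * x) - (a n * x)^2/2)
        / ((a n)^2 * x + b n * a n)) atTop (nhds (Real.exp (-x))) := h3
    apply hlim.congr'
    filter_upwards [eventually_ge_atTop 1, hutop.eventually_gt_atTop 0] with n hn hu0
    have hn0 : (0:ℝ) < n := by exact_mod_cast hn
    have hφ := stdphi_pos (b n)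
    have han : a n ≠ 0 := by
      show (1 : ℝ) / (n * stdphi (b n)) ≠ 0
      positivity
    have hna : (n:ℝ) * stdphi (b n) = (a n)⁻¹ := by
      show _ = (1 / ((n:ℝ) * stdphi (b n)))⁻¹
      rw [one_div, inv_inv]
    have hsh : stdphi (u n) = stdphi (b n) * Real.exp (-(b n * a n * x) - (a n * x)^2/2) := by
      show stdphi (a n * x + b n) = _
      rw [add_comm (a n * x) (b n), stdphi_shift (b n) (a n * x)]
      congr 1
      ring
    have hau : a n * u n = (a n)^2 * x + b n * a n := by
      show a n * (a n * x + b n) = _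
      ring
    rw [hsh, ← hau]
    have hstep : (n:ℝ) * (stdphi (b n) * Real.exp (-(b n * a n * x) - (a n * x)^2/2))
        = (a n)⁻¹ * Real.exp (-(b n * a n * x) - (a n * x)^2/2) := by
      rw [← mul_assoc, hna]
    rw [mul_comm ((n:ℝ)) _] at hstep
    rw [mul_comm ((n:ℝ)) _, hstep]
    rw [div_eq_div_iff (by positivity : (0:ℝ) < a n * u n).ne' hu0.ne']
    field_simp
  have hc : Tendsto (fun n : ℕ => (n:ℝ) * (1 - Phi (u n))) atTop (nhds (Real.exp (-x))) := by
    have h2 : Tendsto (fun n : ℕ => 1 - ((u n)⁻¹)^2) atTop (nhds (1 - 0^2)) :=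
      tendsto_const_nhds.sub ((hutop.inv_tendsto_atTop.pow 2))
    have hlow := hD.mul h2
    have hv : Real.exp (-x) * (1 - 0^2) = Real.exp (-x) := by norm_num
    rw [hv] at hlow
    apply tendsto_of_tendsto_of_tendsto_of_le_of_le' hlow hD
    · filter_upwards [hutop.eventually_gt_atTop 0, eventually_ge_atTop 1] with n hu0 hn
      have hn0 : (0:ℝ) ≤ n := Nat.cast_nonneg n
      have h := mills_lower hu0
      have h2' := mul_le_mul_of_nonneg_left h hn0
      calc (n:ℝ) * stdphi (u n) / u n * (1 - ((u n)⁻¹)^2)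
          = (n:ℝ) * (stdphi (u n) * ((u n)⁻¹ - ((u n)⁻¹)^3)) := by
            field_simp
        _ ≤ (n:ℝ) * (1 - Phi (u n)) := h2'
    · filter_upwards [hutop.eventually_gt_atTop 0, eventually_ge_atTop 1] with n hu0 hn
      have hn0 : (0:ℝ) ≤ n := Nat.cast_nonneg n
      have h := mills_upper hu0
      have h2' := mul_le_mul_of_nonneg_left h hn0
      calc (n:ℝ) * (1 - Phi (u n)) ≤ (n:ℝ) * (stdphi (u n) / u n) := h2'
        _ = (n:ℝ) * stdphi (u n) / u n := by ring
  have hF1 : Tendsto (fun n : ℕ => Phi (u n)) atTop (nhds 1) := Phi_tendsto_atTop.comp hutop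
  have hslope : Tendsto (fun y : ℝ => Real.log y / (y - 1)) (nhdsWithin 1 {(1:ℝ)}ᶜ)
      (nhds 1) := by
    have h := Real.hasDerivAt_log one_ne_zero
    rw [hasDerivAt_iff_tendsto_slope] at h
    have hs : slope Real.log 1 = fun y => Real.log y / (y - 1) := by
      funext y
      rw [slope_def_field, Real.log_one, sub_zero]
    rw [hs] at h
    simpa using h
  have hFne : Tendsto (fun n : ℕ => Phi (u n)) atTop (nhdsWithin 1 {(1:ℝ)}ᶜ) := by
    rw [tendsto_nhdsWithin_iff]
    exact ⟨hF1, Eventually.of_forall fun n => (Phi_lt_one (u n)).ne⟩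
  have hcomp := hslope.comp hFne
  have hnl : Tendsto (fun n : ℕ => (n:ℝ) * Real.log (Phi (u n))) atTop
      (nhds (-Real.exp (-x))) := by
    have h := (hc.neg).mul hcomp
    have hv : -Real.exp (-x) * 1 = -Real.exp (-x) := by ring
    rw [hv] at h
    apply h.congr'
    filter_upwards [] with n
    have hne : Phi (u n) - 1 ≠ 0 := sub_ne_zero.2 (Phi_lt_one (u n)).ne
    show -((n:ℝ) * (1 - Phi (u n))) * (Real.log (Phi (u n)) / (Phi (u n) - 1))
        = (n:ℝ) * Real.log (Phi (u n))
    field_simp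
    ring
  have hexp := (Real.continuous_exp.tendsto _).comp hnl
  have final : Tendsto (fun n : ℕ => (Phi (u n)) ^ n) atTop
      (nhds (Real.exp (-Real.exp (-x)))) := by
    apply hexp.congr'
    filter_upwards [] with n
    show Real.exp ((n:ℝ) * Real.log (Phi (u n))) = (Phi (u n)) ^ n
    rw [Real.exp_nat_mul, Real.exp_log (Phi_pos (u n))]
  exact final
end

section
/- For any distribution F with finite right endpoint x₀ = sup{x : F(x) < 1} < ∞ and density f, if lim_{x→x₀⁻} (x₀ - x) f(x)/(1 - F(x)) = τ for some τ > 0, then with a_n = x₀ - F^{-1}(1 - 1/n) the maximum M_n of n i.i.d. samples satisfies lim_{n→∞} P((M_n - x₀)/a_n ≤ x) = exp(-(-x)^τ) for x ≤ 0. -/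
open MeasureTheory ProbabilityTheory Filter Real
open scoped ENNReal NNReal

lemma exp_upper (x : ℝ) (hx : |x| ≤ 1) : exp x ≤ 1 + x + (3/4) * x^2 := by
  have h := Real.exp_bound hx (n := 2) (by norm_num)
  have h2 : |exp x - (1 + x)| ≤ |x|^2 * (3/4) := by
    convert h using 2
    · norm_num [Finset.sum_range_succ]
    · norm_num [Nat.factorial]
  have := abs_le.1 h2
  have hxx : |x|^2 = x^2 := sq_abs x
  nlinarith [this.2]

lemma expA (c c' L : ℝ) (hc : 0 < c) (hcc' : c < c') (hL : 0 ≤ L) (hL1 : L ≤ 1)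
    (h1 : c' * L ≤ 1) (hsm : (3/4) * (c'^2 + c) * L ≤ c' - c) :
    exp (-(c' * L)) ≤ 1 - c * (exp L - 1) := by
  have h2 : exp (-(c' * L)) ≤ 1 + (-(c'*L)) + (3/4) * (c'*L)^2 := by
    have := exp_upper (-(c'*L)) (by rw [abs_neg, abs_of_nonneg (mul_nonneg (hc.trans hcc').le hL)]; exact h1)
    simpa using this
  have h3 : exp L ≤ 1 + L + (3/4) * L^2 := exp_upper L (by rwa [abs_of_nonneg hL])
  nlinarith [sq_nonneg L, sq_nonneg (c'*L), mul_nonneg hL hL]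

lemma expB (c c' L : ℝ) (hc' : 0 < c') (hcc' : c' < c) (hL : 0 ≤ L) (hL1 : L ≤ 1)
    (h1 : c' * L ≤ 1) (hsm : (3/4) * (c'^2 + c) * L ≤ c - c') :
    exp (c' * L) ≤ 1 + c * (1 - exp (-L)) := by
  have h2 : exp (c' * L) ≤ 1 + c'*L + (3/4) * (c'*L)^2 :=
    exp_upper _ (by rw [abs_of_nonneg (mul_nonneg hc'.le hL)]; exact h1)
  have h3 : exp (-L) ≤ 1 + (-L) + (3/4) * L^2 := by
    have := exp_upper (-L) (by rwa [abs_neg, abs_of_nonneg hL]); simpa using this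
  nlinarith [mul_nonneg hL hL]

lemma pow_lim (u : ℕ → ℝ) (A : ℝ)
    (h : Tendsto (fun n : ℕ => (n : ℝ) * u n) atTop (nhds A))
    (hpos : ∀ᶠ n in atTop, 0 < u n) :
    Tendsto (fun n => (1 - u n) ^ n) atTop (nhds (exp (-A))) := by
  have hu0 : Tendsto u atTop (nhds 0) := by
    have h1 : Tendsto (fun n : ℕ => ((n:ℝ) * u n) * (n:ℝ)⁻¹) atTop (nhds (A * 0)) :=
      h.mul tendsto_inv_atTop_nhds_zero_nat
    rw [mul_zero] at h1
    apply h1.congr'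
    filter_upwards [eventually_ge_atTop 1] with n hn
    have : (n:ℝ) ≠ 0 := Nat.cast_ne_zero.2 (by omega)
    field_simp
  have hslope : Tendsto (fun v : ℝ => Real.log (1 - v) / v)
      (nhdsWithin 0 {(0:ℝ)}ᶜ) (nhds (-1)) := by
    have hd : HasDerivAt (fun v : ℝ => Real.log (1 - v)) (-1) 0 := by
      have h1 : HasDerivAt (fun v : ℝ => 1 - v) (-1) 0 := by
        simpa using (hasDerivAt_id (0:ℝ)).const_sub (1:ℝ)
      have h2 := (Real.hasDerivAt_log (by norm_num : (1:ℝ) - 0 ≠ 0)).comp 0 h1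
      simpa [Function.comp_def] using h2
    have := hasDerivAt_iff_tendsto_slope.1 hd
    apply this.congr
    intro v
    simp [slope_def_field, div_eq_inv_mul]
  have hune : Tendsto u atTop (nhdsWithin 0 {(0:ℝ)}ᶜ) := by
    rw [tendsto_nhdsWithin_iff]
    exact ⟨hu0, by filter_upwards [hpos] with n hn; exact ne_of_gt hn⟩
  have hlog : Tendsto (fun n : ℕ => (n:ℝ) * Real.log (1 - u n)) atTop (nhds (-A)) := by
    have h2 : Tendsto (fun n : ℕ => ((n:ℝ) * u n) * (Real.log (1 - u n) / u n)) atTop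
        (nhds (A * (-1))) := h.mul (hslope.comp hune)
    rw [mul_neg_one] at h2
    apply h2.congr'
    filter_upwards [hpos] with n hn
    field_simp
  have hexp := (Real.continuous_exp.tendsto _).comp hlog
  have hlt : ∀ᶠ n in atTop, u n < 1 := by
    have := hu0.eventually (eventually_lt_nhds (by norm_num : (0:ℝ) < 1))
    exact this
  apply hexp.congr'
  filter_upwards [hlt] with n hn
  have h1 : (0:ℝ) < 1 - u n := by linarith
  simp only [Function.comp]
  rw [← Real.log_pow, Real.exp_log (by positivity)]

lemma key_ineq (μ : Measure ℝ) [IsFiniteMeasure μ] (f : ℝ → ℝ)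
    (hdens : μ = volume.withDensity (fun t => ENNReal.ofReal (f t)))
    (F : ℝ → ℝ) (hF : F = fun t => (μ (Set.Iic t)).toReal)
    (s t A B : ℝ) (hst : s ≤ t) (hA : 0 ≤ A) (hB : 0 ≤ B)
    (hlow : ∀ u ∈ Set.Ioc s t, A ≤ f u) (hup : ∀ u ∈ Set.Ioc s t, f u ≤ B) :
    A * (t - s) ≤ F t - F s ∧ F t - F s ≤ B * (t - s) := by
  have hioc : μ (Set.Ioc s t) = ∫⁻ u in Set.Ioc s t, ENNReal.ofReal (f u) := by
    rw [hdens, withDensity_apply _ measurableSet_Ioc]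
  have hFts : F t - F s = (μ (Set.Ioc s t)).toReal := by
    have hu : Set.Iic s ∪ Set.Ioc s t = Set.Iic t := Set.Iic_union_Ioc_eq_Iic hst
    have hd : Disjoint (Set.Iic s) (Set.Ioc s t) := Set.Iic_disjoint_Ioc le_rfl
    have := measure_union (μ := μ) hd measurableSet_Ioc
    rw [hu] at this
    rw [hF]
    simp only
    rw [this, ENNReal.toReal_add (measure_ne_top μ _) (measure_ne_top μ _)]
    ring
  have hvol : volume (Set.Ioc s t) = ENNReal.ofReal (t - s) := Real.volume_Ioc
  -- lower bound
  have hlow' : ENNReal.ofReal (A * (t - s)) ≤ μ (Set.Ioc s t) := by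
    rw [hioc]
    have h1 : ∫⁻ u in Set.Ioc s t, ENNReal.ofReal A ≤
        ∫⁻ u in Set.Ioc s t, ENNReal.ofReal (f u) := by
      rw [← lintegral_indicator measurableSet_Ioc, ← lintegral_indicator measurableSet_Ioc]
      apply lintegral_mono
      intro u
      by_cases hu : u ∈ Set.Ioc s t
      · simp only [Set.indicator_of_mem hu]
        exact ENNReal.ofReal_le_ofReal (hlow u hu)
      · simp [Set.indicator_of_notMem hu]
    calc ENNReal.ofReal (A * (t - s)) = ENNReal.ofReal A * ENNReal.ofReal (t - s) :=
          ENNReal.ofReal_mul hA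
      _ = ∫⁻ u in Set.Ioc s t, ENNReal.ofReal A := by
          rw [setLIntegral_const, hvol]
      _ ≤ _ := h1
  have hup' : μ (Set.Ioc s t) ≤ ENNReal.ofReal (B * (t - s)) := by
    rw [hioc]
    have h1 : ∫⁻ u in Set.Ioc s t, ENNReal.ofReal (f u) ≤
        ∫⁻ u in Set.Ioc s t, ENNReal.ofReal B := by
      rw [← lintegral_indicator measurableSet_Ioc, ← lintegral_indicator measurableSet_Ioc]
      apply lintegral_mono
      intro u
      by_cases hu : u ∈ Set.Ioc s t
      · simp only [Set.indicator_of_mem hu]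
        exact ENNReal.ofReal_le_ofReal (hup u hu)
      · simp [Set.indicator_of_notMem hu]
    calc ∫⁻ u in Set.Ioc s t, ENNReal.ofReal (f u) ≤
        ∫⁻ u in Set.Ioc s t, ENNReal.ofReal B := h1
      _ = ENNReal.ofReal B * ENNReal.ofReal (t - s) := by rw [setLIntegral_const, hvol]
      _ = ENNReal.ofReal (B * (t - s)) := (ENNReal.ofReal_mul hB).symm
  constructor
  · rw [hFts]
    exact (ENNReal.ofReal_le_iff_le_toReal (measure_ne_top μ _)).1 hlow'
  · rw [hFts]
    exact ENNReal.toReal_le_of_le_ofReal (by nlinarith) hup'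

set_option maxHeartbeats 1000000 in
lemma ratio_big (μ : Measure ℝ) [IsFiniteMeasure μ] (f : ℝ → ℝ)
    (hdens : μ = volume.withDensity (fun t => ENNReal.ofReal (f t)))
    (F : ℝ → ℝ) (hF : F = fun t => (μ (Set.Iic t)).toReal)
    (x₀ τ : ℝ) (hτ : 0 < τ)
    (hmono : Monotone F) (hlt : ∀ t, t < x₀ → F t < 1)
    (hvmb : ∀ ε > 0, ∃ δ > 0, ∀ u, x₀ - δ < u → u < x₀ →
      (τ - ε) * (1 - F u) ≤ (x₀ - u) * f u ∧ (x₀ - u) * f u ≤ (τ + ε) * (1 - F u))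
    (l : ℝ) (hl : 1 < l) :
    Filter.Tendsto (fun a => (1 - F (x₀ - l * a)) / (1 - F (x₀ - a)))
      (nhdsWithin 0 (Set.Ioi 0)) (nhds (l ^ τ)) := by
  have hl0 : (0:ℝ) < l := lt_trans one_pos hl
  have hK : 0 < Real.log l := Real.log_pos hl
  have hcont : Filter.Tendsto (fun c : ℝ => l ^ c) (nhds τ) (nhds (l ^ τ)) := by
    have hc : Continuous fun c : ℝ => exp (Real.log l * c) :=
      Real.continuous_exp.comp (continuous_const.mul continuous_id)
    have h2 := hc.tendsto τ
    have heq : (fun c : ℝ => exp (Real.log l * c)) = fun c : ℝ => l ^ c :=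
      funext fun c => (Real.rpow_def_of_pos hl0 c).symm
    rw [heq] at h2
    rwa [show exp (Real.log l * τ) = l ^ τ from (Real.rpow_def_of_pos hl0 τ).symm] at h2
  rw [Metric.tendsto_nhdsWithin_nhds]
  intro ε hε
  obtain ⟨η₀, hη₀, hηb⟩ := Metric.tendsto_nhds_nhds.1 hcont ε hε
  obtain ⟨η, hηdef⟩ : ∃ x : ℝ, x = min η₀ τ := ⟨_, rfl⟩
  have hη : 0 < η := by rw [hηdef]; exact lt_min hη₀ hτ
  have hη2 : η ≤ η₀ := by rw [hηdef]; exact min_le_left _ _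
  have hη3 : η ≤ τ := by rw [hηdef]; exact min_le_right _ _
  have hc1'pos : 0 < τ - η/2 := by linarith
  have hc1pos : 0 < τ - η/4 := by linarith
  obtain ⟨δ, hδ, hδb⟩ := hvmb (η/4) (by linarith)
  obtain ⟨D2, hD2⟩ : ∃ x : ℝ, x = (3/4)*((τ+η/2)^2 + (τ+η/4)) := ⟨_, rfl⟩
  obtain ⟨D1, hD1⟩ : ∃ x : ℝ, x = (3/4)*((τ-η/2)^2 + (τ-η/4)) := ⟨_, rfl⟩
  have hD2pos : 0 < D2 := by rw [hD2]; nlinarith [sq_nonneg (τ+η/2)]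
  have hD1pos : 0 < D1 := by rw [hD1]; nlinarith [sq_nonneg (τ-η/2)]
  obtain ⟨L₀, hL₀def⟩ : ∃ x : ℝ, x = min (min 1 (1/(τ+η/2))) (min ((η/4)/D2) ((η/4)/D1)) :=
    ⟨_, rfl⟩
  have hL₀ : 0 < L₀ := by
    rw [hL₀def]
    apply lt_min (lt_min one_pos (by positivity)) (lt_min (by positivity) (by positivity))
  obtain ⟨m, hm⟩ := exists_nat_gt (Real.log l / L₀)
  have hmpos : (0:ℝ) < m := lt_trans (div_pos hK hL₀) hm
  have hm0 : (m:ℝ) ≠ 0 := ne_of_gt hmpos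
  obtain ⟨L, hLdef⟩ : ∃ x : ℝ, x = Real.log l / m := ⟨_, rfl⟩
  have hL : 0 < L := by rw [hLdef]; exact div_pos hK hmpos
  have hmL : (m:ℝ) * L = Real.log l := by rw [hLdef]; field_simp
  have hLL₀ : L ≤ L₀ := by
    rw [hLdef]
    exact le_of_lt ((div_lt_iff₀ hmpos).2 (by
      have := (div_lt_iff₀ hL₀).1 hm
      linarith [this]))
  have hL1 : L ≤ 1 := hLL₀.trans (by rw [hL₀def]; exact (min_le_left _ _).trans (min_le_left _ _))
  have hc2L : (τ+η/2) * L ≤ 1 := by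
    have h1 : L ≤ 1/(τ+η/2) := hLL₀.trans
      (by rw [hL₀def]; exact (min_le_left _ _).trans (min_le_right _ _))
    rw [le_div_iff₀ (by linarith)] at h1
    linarith [h1]
  have hc2pos : 0 < τ+η/4 := by linarith only [hτ, hη]
  have hc1L : (τ-η/2) * L ≤ 1 :=
    le_trans (mul_le_mul_of_nonneg_right (by linarith only [hη] : τ-η/2 ≤ τ+η/2) hL.le) hc2L
  have hsm2 : (3/4)*((τ+η/2)^2 + (τ+η/4)) * L ≤ η/4 := by
    have h1 : L ≤ (η/4)/D2 := hLL₀.trans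
      (by rw [hL₀def]; exact (min_le_right _ _).trans (min_le_left _ _))
    rw [le_div_iff₀ hD2pos] at h1
    rw [hD2] at h1
    linarith [h1]
  have hsm1 : (3/4)*((τ-η/2)^2 + (τ-η/4)) * L ≤ η/4 := by
    have h1 : L ≤ (η/4)/D1 := hLL₀.trans
      (by rw [hL₀def]; exact (min_le_right _ _).trans (min_le_right _ _))
    rw [le_div_iff₀ hD1pos] at h1
    rw [hD1] at h1
    linarith [h1]
  have eA := expA (τ+η/4) (τ+η/2) L (by linarith) (by linarith) hL.le hL1 hc2L (by linarith [hsm2])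
  have eB := expB (τ-η/4) (τ-η/2) L hc1'pos (by linarith) hL.le hL1 hc1L (by linarith [hsm1])
  obtain ⟨h, hhdef⟩ : ∃ g : ℝ → ℝ, g = fun v => 1 - F (x₀ - v) := ⟨_, rfl⟩
  have hhpos : ∀ v : ℝ, 0 < v → 0 < h v := by
    intro v hv
    have h9 := hlt (x₀ - v) (by linarith only [hv])
    simp only [hhdef]
    linarith only [h9]
  refine ⟨δ / l, by positivity, ?_⟩
  intro a ha hda
  have ha0 : 0 < a := ha
  have hal : a * l < δ := by
    have h1 : a < δ / l := by
      have h2 := hda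
      rw [Real.dist_eq, sub_zero, abs_of_pos ha0] at h2
      exact h2
    calc a * l < (δ/l) * l := mul_lt_mul_of_pos_right h1 hl0
      _ = δ := by field_simp
  obtain ⟨p, hpdef⟩ : ∃ g : ℕ → ℝ, g = fun k : ℕ => a * exp (k * L) := ⟨_, rfl⟩
  have hp0 : p 0 = a := by rw [hpdef]; simp
  have hpm : p m = a * l := by
    rw [hpdef]
    simp only
    rw [hmL, Real.exp_log hl0]
  have hppos : ∀ k, 0 < p k := by
    intro k; rw [hpdef]; exact mul_pos ha0 (exp_pos _)
  have hpmono : ∀ j k : ℕ, j ≤ k → p j ≤ p k := by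
    intro j k hjk
    rw [hpdef]
    simp only
    apply mul_le_mul_of_nonneg_left _ ha0.le
    apply Real.exp_le_exp.2
    apply mul_le_mul_of_nonneg_right (by exact_mod_cast hjk) hL.le
  have hpstep : ∀ k : ℕ, p (k+1) = p k * exp L := by
    intro k
    rw [hpdef]
    simp only
    rw [mul_assoc, ← Real.exp_add]
    congr 2
    push_cast
    ring
  have hexpL1 : 1 < exp L := by
    have h1 := Real.add_one_le_exp L
    linarith
  have step : ∀ k : ℕ, k < m →
      h (p k) * exp ((τ-η/2) * L) ≤ h (p (k+1)) ∧ h (p (k+1)) ≤ h (p k) * exp ((τ+η/2) * L) := by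
    intro k hk
    have ha' : 0 < p k := hppos k
    have hb' : 0 < p (k+1) := hppos (k+1)
    have hstep := hpstep k
    have hab : p k < p (k+1) := by
      calc p k = p k * 1 := (mul_one _).symm
        _ < p k * exp L := mul_lt_mul_of_pos_left hexpL1 ha'
        _ = p (k+1) := hstep.symm
    have hbδ : p (k+1) < δ := by
      have h1 : p (k+1) ≤ p m := hpmono (k+1) m hk
      rw [hpm] at h1
      linarith only [h1, hal]
    have hApos : 0 ≤ (τ-η/4) * h (p k) / p (k+1) :=
      div_nonneg (mul_nonneg hc1pos.le (hhpos _ ha').le) hb'.le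
    have hBpos : 0 ≤ (τ+η/4) * h (p (k+1)) / p k :=
      div_nonneg (mul_nonneg hc2pos.le (hhpos _ hb').le) ha'.le
    have hpt : ∀ u ∈ Set.Ioc (x₀ - p (k+1)) (x₀ - p k),
        (τ-η/4) * h (p k) / p (k+1) ≤ f u ∧ f u ≤ (τ+η/4) * h (p (k+1)) / p k := by
      intro u hu
      obtain ⟨hu1, hu2⟩ := hu
      have hu3 : x₀ - δ < u := by linarith only [hu1, hbδ]
      have hu4 : u < x₀ := by linarith only [hu2, ha']
      obtain ⟨hb1, hb2⟩ := hδb u hu3 hu4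
      have hxu1 : 0 < x₀ - u := by linarith only [hu4]
      have hxu2 : x₀ - u < p (k+1) := by linarith only [hu1]
      have hxu3 : p k ≤ x₀ - u := by linarith only [hu2]
      have hFa : h (p k) ≤ 1 - F u := by
        simp only [hhdef]
        have h9 := hmono hu2
        linarith only [h9]
      have hFb : 1 - F u ≤ h (p (k+1)) := by
        simp only [hhdef]
        have h9 := hmono (le_of_lt hu1)
        linarith only [h9]
      have hfpos : 0 ≤ f u := by
        have h5 : 0 < (τ-η/4)*(1-F u) :=
          mul_pos hc1pos (lt_of_lt_of_le (hhpos _ ha') hFa)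
        have h6 : 0 < (x₀-u)*(f u) := lt_of_lt_of_le h5 hb1
        rcases mul_pos_iff.1 h6 with ⟨_, h7⟩ | ⟨h7, _⟩
        · exact h7.le
        · linarith only [h7, hxu1]
      constructor
      · rw [div_le_iff₀ hb']
        calc (τ-η/4) * h (p k) ≤ (τ-η/4) * (1 - F u) :=
              mul_le_mul_of_nonneg_left hFa hc1pos.le
          _ ≤ (x₀ - u) * f u := hb1
          _ ≤ p (k+1) * f u := mul_le_mul_of_nonneg_right hxu2.le hfpos
          _ = f u * p (k+1) := mul_comm _ _
      · rw [le_div_iff₀ ha']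
        calc f u * p k ≤ f u * (x₀ - u) := mul_le_mul_of_nonneg_left hxu3 hfpos
          _ = (x₀ - u) * f u := mul_comm _ _
          _ ≤ (τ+η/4) * (1 - F u) := hb2
          _ ≤ (τ+η/4) * h (p (k+1)) := mul_le_mul_of_nonneg_left hFb hc2pos.le
    obtain ⟨hKlow, hKup⟩ := key_ineq μ f hdens F hF (x₀ - p (k+1)) (x₀ - p k)
      ((τ-η/4) * h (p k) / p (k+1)) ((τ+η/4) * h (p (k+1)) / p k)
      (by linarith only [hab]) hApos hBpos (fun u hu => (hpt u hu).1) (fun u hu => (hpt u hu).2)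
    have hdiff : F (x₀ - p k) - F (x₀ - p (k+1)) = h (p (k+1)) - h (p k) := by
      simp only [hhdef]; ring
    have harg : (x₀ - p k) - (x₀ - p (k+1)) = p (k+1) - p k := by ring
    rw [hdiff, harg] at hKlow hKup
    have id1 : (τ+η/4) * h (p (k+1)) / p k * (p (k+1) - p k)
        = (τ+η/4) * h (p (k+1)) * (exp L - 1) := by
      rw [hstep]; field_simp
    have id2 : (τ-η/4) * h (p k) / p (k+1) * (p (k+1) - p k)
        = (τ-η/4) * h (p k) * (1 - exp (-L)) := by
      rw [hstep, Real.exp_neg]; field_simp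
    rw [id1] at hKup
    rw [id2] at hKlow
    constructor
    · have m1 := mul_le_mul_of_nonneg_left eB (hhpos _ ha').le
      linarith only [m1, hKlow]
    · have e1 : h (p (k+1)) * exp (-((τ+η/2) * L)) ≤ h (p k) := by
        have m2 := mul_le_mul_of_nonneg_left eA (hhpos _ hb').le
        linarith only [m2, hKup]
      rw [Real.exp_neg] at e1
      rw [← div_le_iff₀ (exp_pos ((τ+η/2)*L)), div_eq_mul_inv]
      exact e1
  have chain : ∀ k : ℕ, k ≤ m →
      h a * exp ((τ-η/2) * (k * L)) ≤ h (p k) ∧ h (p k) ≤ h a * exp ((τ+η/2) * (k * L)) := by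
    intro k
    induction k with
    | zero => intro _; simp [hp0]
    | succ k ih =>
      intro hk
      have hkm : k < m := Nat.lt_of_succ_le hk
      obtain ⟨ih1, ih2⟩ := ih (le_of_lt hkm)
      obtain ⟨s1, s2⟩ := step k hkm
      have hexp1 : exp ((τ-η/2) * (((k:ℕ)+1 : ℕ) * L)) = exp ((τ-η/2)*(k*L)) * exp ((τ-η/2)*L) := by
        rw [← Real.exp_add]; congr 1; push_cast; ring
      have hexp2 : exp ((τ+η/2) * (((k:ℕ)+1 : ℕ) * L)) = exp ((τ+η/2)*(k*L)) * exp ((τ+η/2)*L) := by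
        rw [← Real.exp_add]; congr 1; push_cast; ring
      constructor
      · rw [hexp1]
        calc h a * (exp ((τ-η/2)*(k*L)) * exp ((τ-η/2)*L))
            = (h a * exp ((τ-η/2)*(k*L))) * exp ((τ-η/2)*L) := by ring
          _ ≤ h (p k) * exp ((τ-η/2)*L) := mul_le_mul_of_nonneg_right ih1 (exp_pos _).le
          _ ≤ h (p (k+1)) := s1
      · rw [hexp2]
        calc h (p (k+1)) ≤ h (p k) * exp ((τ+η/2)*L) := s2
          _ ≤ (h a * exp ((τ+η/2)*(k*L))) * exp ((τ+η/2)*L) :=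
              mul_le_mul_of_nonneg_right ih2 (exp_pos _).le
          _ = h a * (exp ((τ+η/2)*(k*L)) * exp ((τ+η/2)*L)) := by ring
  obtain ⟨cl, cu⟩ := chain m le_rfl
  rw [hpm] at cl cu
  have hrw1 : exp ((τ-η/2) * ((m:ℝ) * L)) = l ^ (τ-η/2) := by
    rw [hmL, Real.rpow_def_of_pos hl0, mul_comm]
  have hrw2 : exp ((τ+η/2) * ((m:ℝ) * L)) = l ^ (τ+η/2) := by
    rw [hmL, Real.rpow_def_of_pos hl0, mul_comm]
  rw [hrw1] at cl
  rw [hrw2] at cu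
  have hha : 0 < h a := hhpos a ha0
  have hratio_lo : l ^ (τ-η/2) ≤ h (a*l) / h a := by
    rw [le_div_iff₀ hha]; linarith only [cl]
  have hratio_hi : h (a*l) / h a ≤ l ^ (τ+η/2) := by
    rw [div_le_iff₀ hha]; linarith only [cu]
  have hlo' : l ^ τ - ε < l ^ (τ-η/2) := by
    have h2 := hηb (x := τ - η/2)
      (by rw [Real.dist_eq, abs_of_nonpos (by linarith only [hη] : τ - η/2 - τ ≤ 0)]
          linarith only [hη, hη2])
    rw [Real.dist_eq] at h2
    have h3 := abs_lt.1 h2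
    linarith only [h3.1]
  have hhi' : l ^ (τ+η/2) < l ^ τ + ε := by
    have h2 := hηb (x := τ + η/2)
      (by rw [Real.dist_eq, abs_of_nonneg (by linarith only [hη] : 0 ≤ τ + η/2 - τ)]
          linarith only [hη, hη2])
    rw [Real.dist_eq] at h2
    have h3 := abs_lt.1 h2
    linarith only [h3.2]
  rw [Real.dist_eq]
  have heqfn : (1 - F (x₀ - l * a)) / (1 - F (x₀ - a)) = h (a*l) / h a := by
    simp only [hhdef]
    rw [mul_comm]
  rw [heqfn, abs_lt]
  constructor
  · linarith only [hratio_lo, hlo']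
  · linarith only [hratio_hi, hhi']

lemma ratio_any (μ : Measure ℝ) [IsFiniteMeasure μ] (f : ℝ → ℝ)
    (hdens : μ = volume.withDensity (fun t => ENNReal.ofReal (f t)))
    (F : ℝ → ℝ) (hF : F = fun t => (μ (Set.Iic t)).toReal)
    (x₀ τ : ℝ) (hτ : 0 < τ)
    (hmono : Monotone F) (hlt : ∀ t, t < x₀ → F t < 1)
    (hvmb : ∀ ε > 0, ∃ δ > 0, ∀ u, x₀ - δ < u → u < x₀ →
      (τ - ε) * (1 - F u) ≤ (x₀ - u) * f u ∧ (x₀ - u) * f u ≤ (τ + ε) * (1 - F u))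
    (l : ℝ) (hl : 0 < l) :
    Filter.Tendsto (fun a => (1 - F (x₀ - l * a)) / (1 - F (x₀ - a)))
      (nhdsWithin 0 (Set.Ioi 0)) (nhds (l ^ τ)) := by
  rcases lt_trichotomy l 1 with hlt1 | heq1 | hgt1
  · have hl' : 1 < 1/l := by rw [lt_div_iff₀ hl]; linarith
    have hbig := ratio_big μ f hdens F hF x₀ τ hτ hmono hlt hvmb (1/l) hl'
    have hmap : Filter.Tendsto (fun a : ℝ => l * a)
        (nhdsWithin 0 (Set.Ioi 0)) (nhdsWithin 0 (Set.Ioi 0)) := by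
      rw [tendsto_nhdsWithin_iff]
      constructor
      · have hc : Continuous fun a : ℝ => l * a := continuous_const.mul continuous_id
        have h1 : Filter.Tendsto (fun a : ℝ => l * a) (nhds 0) (nhds (l * 0)) := hc.tendsto 0
        rw [mul_zero] at h1
        exact h1.mono_left nhdsWithin_le_nhds
      · exact Filter.eventually_of_mem self_mem_nhdsWithin fun a ha => mul_pos hl ha
    have hcomp := hbig.comp hmap
    have hne : ((1/l : ℝ) ^ τ) ≠ 0 := ne_of_gt (Real.rpow_pos_of_pos (by positivity) τ)
    have hinv := hcomp.inv₀ hne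
    have hval : (((1/l : ℝ) : ℝ) ^ τ)⁻¹ = l ^ τ := by
      rw [one_div, Real.inv_rpow hl.le, inv_inv]
    rw [hval] at hinv
    apply hinv.congr
    intro a
    simp only [Function.comp]
    rw [show (1/l) * (l*a) = a by field_simp, inv_div]
  · subst heq1
    rw [Real.one_rpow]
    apply Filter.Tendsto.congr' _ tendsto_const_nhds
    filter_upwards [self_mem_nhdsWithin] with a (ha : 0 < a)
    have h1 : 0 < 1 - F (x₀ - a) := by
      have := hlt (x₀ - a) (by linarith)
      linarith
    rw [one_mul, div_self (ne_of_gt h1)]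
  · exact ratio_big μ f hdens F hF x₀ τ hτ hmono hlt hvmb l hgt1

/-- von Mises sufficient condition for the reverse Weibull max-domain of attraction:
if F has density f, finite right endpoint x₀, and (x₀-x) f(x)/(1-F(x)) → τ > 0 as
x → x₀⁻, then with a_n = x₀ - F⁻¹(1-1/n), P((M_n - x₀)/a_n ≤ x) → exp(-(-x)^τ)
for x ≤ 0, where M_n is the maximum of n i.i.d. samples from F. -/
theorem stmt10 {Ω : Type*} [MeasureSpace Ω] [IsProbabilityMeasure (ℙ : Measure Ω)]
    (μ : Measure ℝ) [IsProbabilityMeasure μ] (f : ℝ → ℝ)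
    (hdens : μ = volume.withDensity (fun t => ENNReal.ofReal (f t)))
    (F : ℝ → ℝ) (hF : F = fun t => (μ (Set.Iic t)).toReal)
    (x₀ : ℝ) (hx₀ : IsLUB {t | F t < 1} x₀)
    (τ : ℝ) (hτ : 0 < τ)
    (hvm : Filter.Tendsto (fun t => (x₀ - t) * f t / (1 - F t))
      (nhdsWithin x₀ (Set.Iio x₀)) (nhds τ))
    (q : ℕ → ℝ) (hq : ∀ n : ℕ, 2 ≤ n → F (q n) = 1 - 1 / n)
    (Y : ℕ → Ω → ℝ) (hmeas : ∀ i, Measurable (Y i))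
    (hindep : iIndepFun Y ℙ)
    (hlaw : ∀ i, Measure.map (Y i) ℙ = μ)
    (x : ℝ) (hx : x ≤ 0) :
    Filter.Tendsto (fun n : ℕ =>
      (ℙ {ω | ∀ i < n, (Y i ω - x₀) / (x₀ - q n) ≤ x}).toReal)
      Filter.atTop (nhds (Real.exp (-(-x) ^ τ))) := by
  -- Basic facts about F
  have hF01 : ∀ t, 0 ≤ F t ∧ F t ≤ 1 := by
    intro t
    rw [hF]
    refine ⟨ENNReal.toReal_nonneg, ?_⟩
    calc (μ (Set.Iic t)).toReal ≤ (μ Set.univ).toReal :=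
          ENNReal.toReal_mono (measure_ne_top μ _) (measure_mono (Set.subset_univ _))
      _ = 1 := by simp
  have hmono : Monotone F := by
    intro s t hst
    rw [hF]
    exact ENNReal.toReal_mono (measure_ne_top μ _) (measure_mono (Set.Iic_subset_Iic.2 hst))
  have hlt : ∀ t, t < x₀ → F t < 1 := by
    intro t ht
    by_contra hc
    push_neg at hc
    have h2 : ∀ s ∈ {t | F t < 1}, s ≤ t := by
      intro s hs
      by_contra hc2
      push_neg at hc2
      have := hmono hc2.le
      simp only [Set.mem_setOf_eq] at hs
      linarith
    have := hx₀.2 h2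
    linarith
  have hFx₀ : F x₀ = 1 := by
    have hgt : ∀ t, x₀ < t → F t = 1 := by
      intro t ht
      have h1 : F t ≤ 1 := (hF01 t).2
      by_contra hc
      have h2 : F t < 1 := lt_of_le_of_ne h1 hc
      have := hx₀.1 h2
      linarith
    have hzero : ∀ t, x₀ < t → μ (Set.Ioi t) = 0 := by
      intro t ht
      have h1 : μ (Set.Iic t) = 1 := by
        have h3 := hgt t ht
        rw [hF] at h3
        simp only at h3
        rw [ENNReal.toReal_eq_one_iff] at h3
        exact h3
      have h2 := prob_add_prob_compl (μ := μ) (measurableSet_Iic (a := t))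
      rw [h1, Set.compl_Iic] at h2
      have h4 : (1:ℝ≥0∞) + μ (Set.Ioi t) = 1 + 0 := by rw [add_zero, h2]
      exact (ENNReal.add_right_inj ENNReal.one_ne_top).1 h4
    have hioi : μ (Set.Ioi x₀) = 0 := by
      have hun : Set.Ioi x₀ = ⋃ n : ℕ, Set.Ioi (x₀ + 1/(n+1)) := by
        ext y
        simp only [Set.mem_Ioi, Set.mem_iUnion]
        constructor
        · intro hy
          obtain ⟨n, hn⟩ := exists_nat_one_div_lt (by linarith : (0:ℝ) < y - x₀)
          exact ⟨n, by push_cast; push_cast at hn; linarith⟩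
        · rintro ⟨n, hn⟩
          have : (0:ℝ) < 1/(n+1) := by positivity
          linarith
      rw [hun]
      exact measure_iUnion_null fun n => hzero _ (by
        have : (0:ℝ) < 1/(n+1) := by positivity
        linarith)
    have h2 := prob_add_prob_compl (μ := μ) (measurableSet_Iic (a := x₀))
    rw [Set.compl_Iic, hioi, add_zero] at h2
    rw [hF]
    simp only
    rw [h2]
    norm_num
  -- vm bounds
  have hvmb : ∀ ε > 0, ∃ δ > 0, ∀ u, x₀ - δ < u → u < x₀ →
      (τ - ε) * (1 - F u) ≤ (x₀ - u) * f u ∧ (x₀ - u) * f u ≤ (τ + ε) * (1 - F u) := by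
    intro ε hε
    have h1 := Metric.tendsto_nhds.1 hvm ε hε
    rw [eventually_nhdsWithin_iff] at h1
    rw [Metric.eventually_nhds_iff] at h1
    obtain ⟨δ, hδ, hδb⟩ := h1
    refine ⟨δ, hδ, ?_⟩
    intro u h2 h3
    have h4 : dist u x₀ < δ := by
      rw [Real.dist_eq, abs_of_nonpos (by linarith)]
      linarith
    have h5 := hδb h4 h3
    rw [Real.dist_eq] at h5
    have h6 := abs_lt.1 h5
    have hD : 0 < 1 - F u := by have := hlt u h3; linarith
    have h7 : (x₀ - u) * f u = ((x₀ - u) * f u / (1 - F u)) * (1 - F u) := by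
      field_simp
    constructor
    · rw [h7]
      exact mul_le_mul_of_nonneg_right (by linarith [h6.1]) hD.le
    · rw [h7]
      exact mul_le_mul_of_nonneg_right (by linarith [h6.2]) hD.le
  -- q n properties
  have hqlt : ∀ n : ℕ, 2 ≤ n → q n < x₀ := by
    intro n hn
    have hn' : (0:ℝ) < 1/n := by positivity
    have h1 : F (q n) < 1 := by rw [hq n hn]; linarith
    have h2 : q n ≤ x₀ := hx₀.1 h1
    rcases lt_or_eq_of_le h2 with h3 | h3
    · exact h3
    · rw [h3, hFx₀] at h1; linarith
  have hqtop : Filter.Tendsto q atTop (nhds x₀) := by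
    rw [Metric.tendsto_atTop]
    intro ε hε
    have hFe : F (x₀ - ε) < 1 := hlt _ (by linarith)
    obtain ⟨N, hN⟩ := exists_nat_one_div_lt (by linarith : (0:ℝ) < 1 - F (x₀ - ε))
    refine ⟨max (N+1) 2, ?_⟩
    intro n hn
    have hn2 : 2 ≤ n := le_trans (le_max_right _ _) hn
    have hnN : N + 1 ≤ n := le_trans (le_max_left _ _) hn
    have hq1 : F (q n) = 1 - 1/n := hq n hn2
    have hlow : F (x₀ - ε) < F (q n) := by
      rw [hq1]
      have h1 : (1:ℝ)/n ≤ 1/(N+1) := by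
        apply div_le_div_of_nonneg_left (by norm_num) (by positivity)
        exact_mod_cast hnN
      push_cast at hN h1 ⊢
      linarith
    have hqgt : x₀ - ε < q n := by
      by_contra hc
      push_neg at hc
      have := hmono hc
      linarith
    have hqlt' := hqlt n hn2
    rw [Real.dist_eq, abs_of_nonpos (by linarith)]
    linarith
  -- the probability identity
  have hprob : ∀ n : ℕ, 2 ≤ n →
      (ℙ {ω | ∀ i < n, (Y i ω - x₀) / (x₀ - q n) ≤ x}).toReal
        = F (x₀ + x * (x₀ - q n)) ^ n := by
    intro n hn
    have han : 0 < x₀ - q n := by linarith [hqlt n hn]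
    have hset : {ω | ∀ i < n, (Y i ω - x₀) / (x₀ - q n) ≤ x}
        = ⋂ i ∈ Finset.range n, Y i ⁻¹' Set.Iic (x₀ + x * (x₀ - q n)) := by
      ext ω
      simp only [Set.mem_setOf_eq, Set.mem_iInter, Set.mem_preimage, Set.mem_Iic,
        Finset.mem_range]
      constructor
      · intro h i hi
        have h1 := h i hi
        rw [div_le_iff₀ han] at h1
        linarith
      · intro h i hi
        have h1 := h i hi
        rw [div_le_iff₀ han]
        linarith
    rw [hset]
    rw [hindep.meas_biInter (fun i _ => ⟨Set.Iic (x₀ + x * (x₀ - q n)), measurableSet_Iic, rfl⟩)]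
    have hlaweq : ∀ i : ℕ, ℙ (Y i ⁻¹' Set.Iic (x₀ + x * (x₀ - q n)))
        = μ (Set.Iic (x₀ + x * (x₀ - q n))) := by
      intro i
      rw [← hlaw i, Measure.map_apply (hmeas i) measurableSet_Iic]
    rw [Finset.prod_congr rfl (fun i _ => hlaweq i), Finset.prod_const, Finset.card_range]
    rw [ENNReal.toReal_pow, hF]
  -- main case split
  rcases eq_or_lt_of_le hx with hx0 | hxneg
  · -- x = 0
    subst hx0
    have : -(0:ℝ) = 0 := neg_zero
    rw [this, Real.zero_rpow (ne_of_gt hτ), neg_zero, Real.exp_zero]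
    apply Filter.Tendsto.congr' _ tendsto_const_nhds
    filter_upwards [eventually_ge_atTop 2] with n hn
    rw [hprob n hn]
    simp [hFx₀]
  · -- x < 0
    have hl : 0 < -x := by linarith
    have hrt := ratio_any μ f hdens F hF x₀ τ hτ hmono hlt hvmb (-x) hl
    have ha : Filter.Tendsto (fun n : ℕ => x₀ - q n) atTop (nhdsWithin 0 (Set.Ioi 0)) := by
      rw [tendsto_nhdsWithin_iff]
      constructor
      · have h1 : Filter.Tendsto (fun n : ℕ => x₀ - q n) atTop (nhds (x₀ - x₀)) :=
          (tendsto_const_nhds).sub hqtop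
        rwa [sub_self] at h1
      · filter_upwards [eventually_ge_atTop 2] with n hn
        exact sub_pos.2 (hqlt n hn)
    have hcomp := hrt.comp ha
    have hnu : Filter.Tendsto (fun n : ℕ => (n:ℝ) * (1 - F (x₀ + x * (x₀ - q n)))) atTop
        (nhds ((-x) ^ τ)) := by
      apply hcomp.congr'
      filter_upwards [eventually_ge_atTop 2] with n hn
      have hn0 : (n:ℝ) ≠ 0 := by positivity
      simp only [Function.comp]
      rw [show x₀ - (x₀ - q n) = q n by ring, hq n hn]
      rw [show (1:ℝ) - (1 - 1/n) = 1/n by ring]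
      rw [show x₀ - (-x) * (x₀ - q n) = x₀ + x * (x₀ - q n) by ring]
      field_simp
    have hupos : ∀ᶠ n in atTop, 0 < 1 - F (x₀ + x * (x₀ - q n)) := by
      filter_upwards [eventually_ge_atTop 2] with n hn
      have han : 0 < x₀ - q n := by linarith [hqlt n hn]
      have h1 : x₀ + x * (x₀ - q n) < x₀ := by nlinarith
      have := hlt _ h1
      linarith
    have hpl := pow_lim (fun n => 1 - F (x₀ + x * (x₀ - q n))) ((-x) ^ τ) hnu hupos
    apply Filter.Tendsto.congr' _ hpl
    filter_upwards [eventually_ge_atTop 2] with n hn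
    rw [hprob n hn]
    congr 1
    ring
end
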